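/- If M is a co-LMNS of Φ (i.e., λ(Φ)∖M is an LMNS of Φ), then M is an irreducible hitting set of LMES(Φ). -/
import Mathlib


namespace LCNFStmt

/-- A clause is a finite set of literals (variable, polarity). -/
abbrev Clause (V : Type) := Finset (V × Bool)

def ClauseSat {V : Type} (τ : V → Bool) (c : Clause V) : Prop :=
  ∃ p ∈ c, τ p.1 = p.2

/-- τ is a model of a CNF formula (finite set of clauses). -/
def Sat {V : Type} (τ : V → Bool) (F : Finset (Clause V)) : Prop :=
  ∀ c ∈ F, ClauseSat τ c

/-- Logical equivalence of CNF formulas: same models. -/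
def Equiv {V : Type} (F₁ F₂ : Finset (Clause V)) : Prop :=
  ∀ τ, Sat τ F₁ ↔ Sat τ F₂

/-- F₁ implies F₂: every model of F₁ is a model of F₂. -/
def Implies {V : Type} (F₁ F₂ : Finset (Clause V)) : Prop :=
  ∀ τ, Sat τ F₁ → Sat τ F₂

/-- A labelled CNF formula: a CNF formula together with a labelling function. -/
structure LCNF (V L : Type) where
  F : Finset (Clause V)
  lab : Clause V → Finset L

variable {V L : Type} [DecidableEq V] [DecidableEq L]

/-- The set of active labels λ(Φ). -/
def LCNF.active (Φ : LCNF V L) : Finset L := Φ.F.biUnion Φ.lab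

/-- Clause set of the induced subformula Φ|_S : clauses all of whose labels lie in S. -/
def LCNF.restrict (Φ : LCNF V L) (S : Finset L) : Finset (Clause V) :=
  Φ.F.filter (fun c => Φ.lab c ⊆ S)

/-- Φ|_S ≡ Φ. -/
def LCNF.EquivTo (Φ : LCNF V L) (S : Finset L) : Prop :=
  Equiv (Φ.restrict S) Φ.F

/-- A label is redundant in Φ if removing it keeps the formula equivalent. -/
def LCNF.Redundant (Φ : LCNF V L) (l : L) : Prop :=
  Φ.EquivTo (Φ.active.erase l)

/-- Labelled minimal equivalent subset. -/
def LCNF.LMES (Φ : LCNF V L) (S : Finset L) : Prop :=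
  S ⊆ Φ.active ∧ Φ.EquivTo S ∧ ∀ S' ⊂ S, ¬ Φ.EquivTo S'

/-- Labelled maximal non-equivalent subset. -/
def LCNF.LMNS (Φ : LCNF V L) (S : Finset L) : Prop :=
  S ⊆ Φ.active ∧ ¬ Φ.EquivTo S ∧ ∀ S', S ⊂ S' → S' ⊆ Φ.active → Φ.EquivTo S'

/-- Labelled maximal satisfiable subset. -/
def LCNF.LMSS (Φ : LCNF V L) (S : Finset L) : Prop :=
  S ⊆ Φ.active ∧ (∃ τ, Sat τ (Φ.restrict S)) ∧
    ∀ S', S ⊂ S' → S' ⊆ Φ.active → ¬ ∃ τ, Sat τ (Φ.restrict S')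

/-- Hitting set of a collection of finite sets. -/
def HittingSet {α : Type} [DecidableEq α] (𝒮 : Set (Finset α)) (H : Finset α) : Prop :=
  ∀ A ∈ 𝒮, (H ∩ A).Nonempty

/-- Irreducible hitting set. -/
def IrredHittingSet {α : Type} [DecidableEq α] (𝒮 : Set (Finset α)) (H : Finset α) : Prop :=
  HittingSet 𝒮 H ∧ ∀ H' ⊂ H, ¬ HittingSet 𝒮 H'


lemma restrict_mono {V L : Type} [DecidableEq V] [DecidableEq L] (Φ : LCNF V L)
    {S S' : Finset L} (h : S ⊆ S') : Φ.restrict S ⊆ Φ.restrict S' := by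
  intro c hc
  simp only [LCNF.restrict, Finset.mem_filter] at *
  exact ⟨hc.1, hc.2.trans h⟩

lemma sat_restrict_of_sat {V L : Type} [DecidableEq V] [DecidableEq L] (Φ : LCNF V L)
    {τ : V → Bool} (h : Sat τ Φ.F) (S : Finset L) : Sat τ (Φ.restrict S) := by
  intro c hc
  exact h c (Finset.mem_filter.mp hc).1

lemma equivTo_mono {V L : Type} [DecidableEq V] [DecidableEq L] (Φ : LCNF V L)
    {S S' : Finset L} (h : S ⊆ S') (he : Φ.EquivTo S) : Φ.EquivTo S' := by
  intro τ
  constructor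
  · intro hs
    exact (he τ).mp (fun c hc => hs c (restrict_mono Φ h hc))
  · intro hF
    exact sat_restrict_of_sat Φ hF S'

lemma exists_lmes_subset {V L : Type} [DecidableEq V] [DecidableEq L] (Φ : LCNF V L) :
    ∀ (T : Finset L), T ⊆ Φ.active → Φ.EquivTo T → ∃ S ⊆ T, Φ.LMES S := by
  classical
  intro T
  induction T using Finset.strongInductionOn with
  | _ T ih =>
    intro hT he
    by_cases h : ∀ S' ⊂ T, ¬ Φ.EquivTo S'
    · exact ⟨T, Finset.Subset.refl T, hT, he, h⟩
    · push_neg at h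
      obtain ⟨S', hS', heS'⟩ := h
      obtain ⟨S, hS, hlmes⟩ := ih S' hS' (hS'.1.trans hT) heS'
      exact ⟨S, hS.trans hS'.1, hlmes⟩

theorem colmns_is_irred_hs_of_lmes {V L : Type} [DecidableEq V] [DecidableEq L]
    (Φ : LCNF V L) (hne : Φ.active.Nonempty)
    (M : Finset L) (hM : M ⊆ Φ.active)
    (hlmns : Φ.LMNS (Φ.active \ M)) :
    IrredHittingSet {S | Φ.LMES S} M := by
  classical
  obtain ⟨hNsub, hNne, hNmax⟩ := hlmns
  constructor
  · -- hitting
    intro S hS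
    obtain ⟨hSsub, hSeq, _⟩ := hS
    by_contra hemp
    rw [Finset.not_nonempty_iff_eq_empty] at hemp
    -- S ⊆ active \ M
    have hSN : S ⊆ Φ.active \ M := by
      intro x hx
      rw [Finset.mem_sdiff]
      refine ⟨hSsub hx, fun hxM => ?_⟩
      have : x ∈ M ∩ S := Finset.mem_inter.mpr ⟨hxM, hx⟩
      simp [hemp] at this
    exact hNne (equivTo_mono Φ hSN hSeq)
  · -- irreducible
    intro H' hH' hhit
    obtain ⟨l, hlM, hlH'⟩ := Finset.exists_of_ssubset hH'
    have hlN : l ∉ Φ.active \ M := by simp [hM hlM, hlM]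
    have hT : (Φ.active \ M) ∪ {l} ⊆ Φ.active := by
      intro x hx
      rcases Finset.mem_union.mp hx with h | h
      · exact (Finset.mem_sdiff.mp h).1
      · simp only [Finset.mem_singleton] at h; subst h; exact hM hlM
    have hTeq : Φ.EquivTo ((Φ.active \ M) ∪ {l}) := by
      apply hNmax
      · exact Finset.ssubset_iff_of_subset Finset.subset_union_left |>.mpr
          ⟨l, Finset.mem_union_right _ (Finset.mem_singleton_self l), hlN⟩
      · exact hT
    obtain ⟨S, hSsub, hlmes⟩ := exists_lmes_subset Φ _ hT hTeq
    obtain ⟨x, hx⟩ := hhit S hlmes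
    rw [Finset.mem_inter] at hx
    have hxH' : x ∈ H' := hx.1
    have hxM : x ∈ M := hH'.1 hxH'
    rcases Finset.mem_union.mp (hSsub hx.2) with h | h
    · exact (Finset.mem_sdiff.mp h).2 hxM
    · simp only [Finset.mem_singleton] at h; subst h; exact hlH' hxH'

end LCNFStmt
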